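/- Let M : ℕ → ℝ be positive and weakly log-convex (k! M k is log-convex) with (k! M k)^{1/k} → ∞. Suppose N : ℕ → ℝ is positive with the property that for all p, j ≥ 1: C₂ (M (p j))^{1/(pj)} ≥ (N p)^{1/p} for some constant C₂, and suppose (k! M k)^{1/k} is non-decreasing. Then there is a constant C₃ such that (N p)^{1/p} ≤ C₃ (M k)^{1/k} for all p ≤ k. -/

import Mathlib

open Filter

private lemma fact_rpow_le (n : ℕ) (hn : 1 ≤ n) :
    ((n.factorial : ℝ)) ^ ((1 : ℝ) / n) ≤ n := by
  have hn0 : (n : ℝ) ≠ 0 := Nat.cast_ne_zero.mpr (by omega)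
  have h1 : (n.factorial : ℝ) ≤ (n : ℝ) ^ n := by
    exact_mod_cast Nat.factorial_le_pow n
  have h2 : ((n.factorial : ℝ)) ^ ((1 : ℝ) / n) ≤ ((n : ℝ) ^ (n : ℕ)) ^ ((1 : ℝ) / n) :=
    Real.rpow_le_rpow (by positivity) h1 (by positivity)
  calc ((n.factorial : ℝ)) ^ ((1 : ℝ) / n) ≤ ((n : ℝ) ^ (n : ℕ)) ^ ((1 : ℝ) / n) := h2
    _ = (n : ℝ) := by
        rw [← Real.rpow_natCast (n : ℝ) n, ← Real.rpow_mul (by positivity)]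
        field_simp
        simp

private lemma le_exp_mul_fact_rpow (n : ℕ) (hn : 1 ≤ n) :
    (n : ℝ) ≤ Real.exp 1 * ((n.factorial : ℝ)) ^ ((1 : ℝ) / n) := by
  have hn0 : (n : ℝ) ≠ 0 := Nat.cast_ne_zero.mpr (by omega)
  have hf : (0 : ℝ) < n.factorial := Nat.cast_pos.mpr n.factorial_pos
  have h1 : (n : ℝ) ^ n ≤ n.factorial * Real.exp n := by
    have := Real.pow_div_factorial_le_exp (x := (n : ℝ)) (by positivity) n
    calc (n : ℝ) ^ n = (n : ℝ) ^ n / n.factorial * n.factorial := by field_simp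
      _ ≤ Real.exp n * n.factorial := by
          exact mul_le_mul_of_nonneg_right this hf.le
      _ = n.factorial * Real.exp n := by ring
  have h2 : ((n : ℝ) ^ (n : ℕ)) ^ ((1 : ℝ) / n) ≤
      ((n.factorial : ℝ) * Real.exp n) ^ ((1 : ℝ) / n) :=
    Real.rpow_le_rpow (by positivity) h1 (by positivity)
  have e1 : ((n : ℝ) ^ (n : ℕ)) ^ ((1 : ℝ) / n) = (n : ℝ) := by
    rw [← Real.rpow_natCast (n : ℝ) n, ← Real.rpow_mul (by positivity)]
    field_simp
    simp
  have e2 : ((n.factorial : ℝ) * Real.exp n) ^ ((1 : ℝ) / n) =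
      ((n.factorial : ℝ)) ^ ((1 : ℝ) / n) * Real.exp 1 := by
    rw [Real.mul_rpow hf.le (Real.exp_pos _).le]
    congr 1
    rw [← Real.exp_one_rpow (n : ℝ), ← Real.rpow_mul (Real.exp_pos 1).le]
    field_simp
    simp
  rw [e1, e2] at h2
  rw [mul_comm]
  exact h2

theorem interpolate_root_estimate (M N : ℕ → ℝ) (C₂ : ℝ)
    (hM : ∀ k, 0 < M k) (hN : ∀ k, 0 < N k) (hC₂ : 0 < C₂)
    (hwlc : ∀ k, 1 ≤ k →
      ((k.factorial : ℝ) * M k) ^ 2 ≤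
        ((k - 1).factorial : ℝ) * M (k - 1) * (((k + 1).factorial : ℝ) * M (k + 1)))
    (hinf : Tendsto (fun k : ℕ => ((k.factorial : ℝ) * M k) ^ ((1 : ℝ) / k))
      atTop atTop)
    (hmono : ∀ j k : ℕ, 1 ≤ j → j ≤ k →
      ((j.factorial : ℝ) * M j) ^ ((1 : ℝ) / j) ≤
        ((k.factorial : ℝ) * M k) ^ ((1 : ℝ) / k))
    (hest : ∀ p j : ℕ, 1 ≤ p → 1 ≤ j →
      (N p) ^ ((1 : ℝ) / p) ≤ C₂ * (M (p * j)) ^ ((1 : ℝ) / (p * j : ℕ))) :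
    ∃ C₃ : ℝ, 0 < C₃ ∧ ∀ p k : ℕ, 1 ≤ p → p ≤ k →
      (N p) ^ ((1 : ℝ) / p) ≤ C₃ * (M k) ^ ((1 : ℝ) / k) := by
  refine ⟨C₂ * (2 * Real.exp 1), by positivity, fun p k hp hpk => ?_⟩
  have hp0 : 0 < p := hp
  have hk : 1 ≤ k := le_trans hp hpk
  set j := k / p with hj
  have hj1 : 1 ≤ j := Nat.one_le_div_iff hp0 |>.mpr hpk
  set m := p * j with hm
  have hm1 : 1 ≤ m := Nat.mul_pos hp0 hj1
  have hmk : m ≤ k := by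
    rw [hm, hj, mul_comm]; exact Nat.div_mul_le_self k p
  have hk2m : (k : ℝ) < 2 * m := by
    have h1 : k < (j + 1) * p := (Nat.div_lt_iff_lt_mul hp0).mp (by omega)
    have h2 : p ≤ m := Nat.le_mul_of_pos_right p hj1
    have : k < 2 * m := by
      calc k < (j + 1) * p := h1
        _ = m + p := by rw [hm]; ring
        _ ≤ 2 * m := by omega
    exact_mod_cast this
  -- key positivity facts
  have hMm := hM m
  have hMk := hM k
  have hfm : (0 : ℝ) < m.factorial := Nat.cast_pos.mpr m.factorial_pos
  have hfk : (0 : ℝ) < k.factorial := Nat.cast_pos.mpr k.factorial_pos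
  set F : ℝ := ((m.factorial : ℝ)) ^ ((1 : ℝ) / m) with hF
  set G : ℝ := ((k.factorial : ℝ)) ^ ((1 : ℝ) / k) with hG
  have hFpos : 0 < F := Real.rpow_pos_of_pos hfm _
  have hGpos : 0 < G := Real.rpow_pos_of_pos hfk _
  -- G ≤ 2 e F
  have hGF : G ≤ 2 * Real.exp 1 * F := by
    have h1 : G ≤ (k : ℝ) := fact_rpow_le k hk
    have h2 : (m : ℝ) ≤ Real.exp 1 * F := le_exp_mul_fact_rpow m hm1
    calc G ≤ (k : ℝ) := h1
      _ ≤ 2 * m := hk2m.le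
      _ ≤ 2 * (Real.exp 1 * F) := by nlinarith
      _ = 2 * Real.exp 1 * F := by ring
  -- monotonicity: F * (M m)^{1/m} ≤ G * (M k)^{1/k}
  have hmul : F * (M m) ^ ((1 : ℝ) / m) ≤ G * (M k) ^ ((1 : ℝ) / k) := by
    have := hmono m k hm1 hmk
    rwa [Real.mul_rpow hfm.le hMm.le, Real.mul_rpow hfk.le hMk.le] at this
  have hMmle : (M m) ^ ((1 : ℝ) / m) ≤ 2 * Real.exp 1 * (M k) ^ ((1 : ℝ) / k) := by
    have hb : (0 : ℝ) ≤ (M k) ^ ((1 : ℝ) / k) := (Real.rpow_pos_of_pos hMk _).le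
    have h3 : F * (M m) ^ ((1 : ℝ) / m) ≤ (2 * Real.exp 1 * F) * (M k) ^ ((1 : ℝ) / k) :=
      le_trans hmul (mul_le_mul_of_nonneg_right hGF hb)
    have := (mul_le_mul_iff_right₀ hFpos).mp (by linarith [h3] : F * ((M m) ^ ((1 : ℝ) / m)) ≤ F * (2 * Real.exp 1 * (M k) ^ ((1 : ℝ) / k)))
    exact this
  calc (N p) ^ ((1 : ℝ) / p) ≤ C₂ * (M m) ^ ((1 : ℝ) / (m : ℕ)) := hest p j hp hj1
    _ ≤ C₂ * (2 * Real.exp 1 * (M k) ^ ((1 : ℝ) / k)) := by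
        exact mul_le_mul_of_nonneg_left hMmle hC₂.le
    _ = C₂ * (2 * Real.exp 1) * (M k) ^ ((1 : ℝ) / k) := by ring
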